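/- Let F(u,v) = 8u²v² − 4u² − 4v² − 2uv + 3. Then F and its partial derivative ∂F/∂v = 16u²v − 8v − 2u have no common real zero. -/

import Mathlib

theorem stmt_4 :
    ¬ ∃ u v : ℝ, 8 * u ^ 2 * v ^ 2 - 4 * u ^ 2 - 4 * v ^ 2 - 2 * u * v + 3 = 0 ∧
      16 * u ^ 2 * v - 8 * v - 2 * u = 0 := by
  rintro ⟨u, v, h1, h2⟩
  have hd : (8:ℝ) * u ^ 2 - 4 ≠ 0 := by
    intro h
    have hu : u = 0 := by nlinarith
    rw [hu] at h; norm_num at h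
  have hv : v = u / (8 * u ^ 2 - 4) := by
    rw [eq_div_iff hd]
    linarith
  rw [hv] at h1
  field_simp at h1
  have hq : 32 * u ^ 4 - 39 * u ^ 2 + 12 > 0 := by
    nlinarith [sq_nonneg (8 * u ^ 2 - 39 / 8)]
  have hs : (2 * u ^ 2 - 1) ^ 2 > 0 := by
    have : (2:ℝ) * u ^ 2 - 1 ≠ 0 := fun h => hd (by linarith)
    positivity
  nlinarith [mul_pos hs hq]
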